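/- arXiv:2502.20164 — 8 statements merged into one kernel-verified Lean document; each statement's English description precedes it below -/
import Mathlib

section
/- Let (X,d) be a metric space and n a positive integer. Let C_n(X) be the set of all nonempty subsets of X of cardinality at most n, and let p : X^n → C_n(X) be the surjection p(x_1,…,x_n) = {x_1,…,x_n}. Then the quotient topology on C_n(X) coinduced by p from the product topology on X^n coincides with the topology on C_n(X) induced by the Hausdorff metric d_H. -/
open Set Topology

/-- The configuration space of at most `n` points: nonempty subsets of `X`
of cardinality at most `n`. -/
def AtMostN (X : Type*) (n : ℕ) : Type _ :=
  {S : Set X // S.Nonempty ∧ S.Finite ∧ S.ncard ≤ n}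

/-- The map sending an `n`-tuple to the set of its coordinates. -/
def tupleToSet {X : Type*} {n : ℕ} (hn : 0 < n) (x : Fin n → X) : AtMostN X n :=
  ⟨Set.range x, ⟨x ⟨0, hn⟩, Set.mem_range_self _⟩, Set.finite_range x, by
    rw [← Set.image_univ]
    calc (x '' Set.univ).ncard ≤ (Set.univ : Set (Fin n)).ncard :=
          Set.ncard_image_le Set.finite_univ
      _ = n := by simp [Set.ncard_univ]⟩

/-- The quotient topology on `AtMostN X n` coinduced from the product topology on `X^n`. -/
def quotTopology (X : Type*) [TopologicalSpace X] {n : ℕ} (hn : 0 < n) :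
    TopologicalSpace (AtMostN X n) :=
  TopologicalSpace.coinduced (tupleToSet hn) inferInstance

/-- Finite nonempty sets as nonempty compact sets, for the Hausdorff metric. -/
def toNonemptyCompacts {X : Type*} [MetricSpace X] {n : ℕ} (A : AtMostN X n) :
    TopologicalSpace.NonemptyCompacts X :=
  ⟨⟨A.1, A.2.2.1.isCompact⟩, A.2.1⟩

/-- The topology of the Hausdorff metric on `AtMostN X n`: the topology induced
by the Hausdorff metric on nonempty compact (in particular, finite) subsets. -/
def hausdorffTopology (X : Type*) [MetricSpace X] (n : ℕ) :
    TopologicalSpace (AtMostN X n) :=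
  TopologicalSpace.induced toNonemptyCompacts inferInstance

open Metric

lemma exists_range_eq' {X : Type*} {n : ℕ} (hn : 0 < n) (S : Set X) (hne : S.Nonempty)
    (hfin : S.Finite) (hcard : S.ncard ≤ n) : ∃ y : Fin n → X, Set.range y = S := by
  classical
  set s := hfin.toFinset with hs_def
  have hsne : s.Nonempty := by simpa [hs_def] using hne
  have hk : 0 < s.card := Finset.card_pos.2 hsne
  have hkn : s.card ≤ n := by
    rwa [Set.ncard_eq_toFinset_card S hfin] at hcard
  let e := s.equivFin
  refine ⟨fun i => (e.symm ⟨i.1 % s.card, Nat.mod_lt _ hk⟩ : X), ?_⟩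
  ext z
  simp only [Set.mem_range]
  constructor
  · rintro ⟨i, rfl⟩
    exact hfin.mem_toFinset.1 (e.symm ⟨i.1 % s.card, Nat.mod_lt _ hk⟩).2
  · intro hz
    have hzs : z ∈ s := hfin.mem_toFinset.2 hz
    set j := e ⟨z, hzs⟩ with hj
    refine ⟨⟨j.1, lt_of_lt_of_le j.2 hkn⟩, ?_⟩
    have : (⟨j.1 % s.card, Nat.mod_lt _ hk⟩ : Fin s.card) = j := by
      ext; simp [Nat.mod_eq_of_lt j.2]
    rw [this, hj, Equiv.symm_apply_apply]

lemma exists_sep' {X : Type*} [MetricSpace X] (S : Set X) (hfin : S.Finite) :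
    ∃ s > 0, ∀ a ∈ S, ∀ b ∈ S, dist a b < s → a = b := by
  classical
  set T := ((hfin.toFinset ×ˢ hfin.toFinset).filter fun p => p.1 ≠ p.2).image
    fun p => dist p.1 p.2 with hT_def
  have hmemT : ∀ a ∈ S, ∀ b ∈ S, a ≠ b → dist a b ∈ T := by
    intro a ha b hb hne
    exact Finset.mem_image.2 ⟨(a, b), by
      simp [Finset.mem_filter, hfin.mem_toFinset, ha, hb, hne], rfl⟩
  by_cases hT : T.Nonempty
  · refine ⟨T.min' hT, ?_, ?_⟩
    · obtain ⟨⟨a, b⟩, hmem, heq⟩ := Finset.mem_image.1 (T.min'_mem hT)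
      have : a ≠ b := (Finset.mem_filter.1 hmem).2
      rw [← heq]
      exact dist_pos.2 this
    · intro a ha b hb hlt
      by_contra hne
      exact absurd hlt (not_lt.2 (T.min'_le _ (hmemT a ha b hb hne)))
  · refine ⟨1, one_pos, fun a ha b hb _ => ?_⟩
    by_contra hne
    exact hT ⟨_, hmemT a ha b hb hne⟩

/-- Theorem: for a metric space `X`, the quotient topology on the configuration
space `C_n(X)` of at most `n` points, coinduced from the product topology on
`X^n`, coincides with the topology induced by the Hausdorff metric. -/
theorem quotTopology_eq_hausdorffTopology
    {X : Type*} [MetricSpace X] (n : ℕ) (hn : 0 < n) :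
    quotTopology X hn = hausdorffTopology X n := by
  classical
  apply le_antisymm
  · -- quotient topology is finer: the composed map `X^n → NonemptyCompacts X` is continuous
    rw [quotTopology, hausdorffTopology, coinduced_le_iff_le_induced, induced_compose]
    have key : ∀ x y : Fin n → X,
        dist (toNonemptyCompacts (tupleToSet hn x)) (toNonemptyCompacts (tupleToSet hn y))
          ≤ dist x y := by
      intro x y
      rw [Metric.NonemptyCompacts.dist_eq]
      apply hausdorffDist_le_of_mem_dist dist_nonneg
      · rintro _ ⟨i, rfl⟩
        exact ⟨y i, Set.mem_range_self i, dist_le_pi_dist x y i⟩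
      · rintro _ ⟨i, rfl⟩
        exact ⟨x i, Set.mem_range_self i, by
          rw [dist_comm]; exact dist_le_pi_dist x y i⟩
    have hcont : Continuous (toNonemptyCompacts ∘ tupleToSet hn (X := X)) := by
      rw [Metric.continuous_iff]
      intro b ε hε
      exact ⟨ε, hε, fun a ha => lt_of_le_of_lt (key a b) ha⟩
    exact continuous_iff_le_induced.mp hcont
  · -- Hausdorff topology is finer
    rw [TopologicalSpace.le_def]
    intro U hU
    have hUopen : IsOpen (tupleToSet hn ⁻¹' U) := hU
    have key : ∀ A : AtMostN X n, A ∈ U → ∃ ε, 0 < ε ∧ ∀ B : AtMostN X n,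
        dist (toNonemptyCompacts B) (toNonemptyCompacts A) < ε → B ∈ U := by
      intro A hA
      obtain ⟨sep, hsep_pos, hsep⟩ := exists_sep' A.1 A.2.2.1
      set F : Set (Fin n → X) := {x | Set.range x = A.1} with hF_def
      have hFsub : F ⊆ tupleToSet hn ⁻¹' U := by
        intro x hx
        have : tupleToSet hn x = A := Subtype.ext hx
        simpa [Set.mem_preimage, this] using hA
      have hFfin : F.Finite := by
        apply Set.Finite.subset (Set.Finite.pi fun _ : Fin n => A.2.2.1)
        intro x hx
        simp only [Set.mem_pi, Set.mem_univ, forall_true_left]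
        intro i
        exact hx ▸ Set.mem_range_self i
      obtain ⟨δ, hδpos, hδ⟩ :=
        (hFfin.isCompact).exists_thickening_subset_open hUopen hFsub
      refine ⟨min δ (sep / 2), by positivity, ?_⟩
      intro B hB
      rw [Metric.NonemptyCompacts.dist_eq] at hB
      have hBA : hausdorffDist B.1 A.1 < min δ (sep / 2) := hB
      have hne_top : EMetric.hausdorffEdist B.1 A.1 ≠ ⊤ :=
        hausdorffEdist_ne_top_of_nonempty_of_bounded B.2.1 A.2.1
          B.2.2.1.isBounded A.2.2.1.isBounded
      obtain ⟨y, hy⟩ := exists_range_eq' hn B.1 B.2.1 B.2.2.1 B.2.2.2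
      have hyB : ∀ i, y i ∈ B.1 := fun i => hy ▸ Set.mem_range_self i
      choose x hx1 hx2 using fun i =>
        exists_dist_lt_of_hausdorffDist_lt (hyB i) hBA hne_top
      have hεsep : min δ (sep / 2) ≤ sep / 2 := min_le_right _ _
      have hxA : Set.range x = A.1 := by
        apply subset_antisymm
        · rintro _ ⟨i, rfl⟩; exact hx1 i
        · intro a ha
          obtain ⟨b, hbB, hab⟩ := exists_dist_lt_of_hausdorffDist_lt' ha hBA hne_top
          rw [← hy] at hbB
          obtain ⟨i, rfl⟩ := hbB
          have h1 : dist a (x i) ≤ dist a (y i) + dist (y i) (x i) := dist_triangle _ _ _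
          have h2 : dist a (x i) < sep := by
            have := hx2 i
            have h3 : dist a (y i) < min δ (sep / 2) := by rwa [dist_comm] at hab
            calc dist a (x i) ≤ dist a (y i) + dist (y i) (x i) := h1
              _ < min δ (sep / 2) + min δ (sep / 2) := by linarith
              _ ≤ sep / 2 + sep / 2 := by linarith
              _ = sep := by ring
          have : a = x i := hsep a ha (x i) (hx1 i) h2
          exact this ▸ Set.mem_range_self i
      have hyF : y ∈ Metric.thickening δ F := by
        rw [Metric.mem_thickening_iff]
        refine ⟨x, hxA, ?_⟩
        rw [dist_pi_lt_iff hδpos]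
        intro i
        calc dist (y i) (x i) < min δ (sep / 2) := hx2 i
          _ ≤ δ := min_le_left _ _
      have hyU : tupleToSet hn y ∈ U := hδ hyF
      have : tupleToSet hn y = B := Subtype.ext hy
      exact this ▸ hyU
    choose! ε hεpos hεprop using key
    refine ⟨⋃ A ∈ U, Metric.ball (toNonemptyCompacts A) (ε A), ?_, ?_⟩
    · exact isOpen_biUnion fun _ _ => Metric.isOpen_ball
    · ext B
      simp only [Set.mem_preimage, Set.mem_iUnion, Metric.mem_ball]
      constructor
      · rintro ⟨A, hA, hd⟩
        exact hεprop A hA B hd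
      · intro hB
        exact ⟨B, hB, by simpa using hεpos B hB⟩
end

section
/- Let X be a connected topological space, Y a topological space with empty boundary in itself (Y is open and closed in Y), and let ψ = (n_ψ, w_ψ) be an ℕ-weighted map from X to Y. Then the function x ↦ Σ_{y∈Y} w_ψ(x,y) is constant on X; its common value I_w(ψ) is called the weighted index of ψ. -/
open Set Topology

/-- An `ℕ`-weighted map from `X` to `Y`: an upper semicontinuous finite-valued
set-valued map `toFun` together with a weight function `weight` which is zero
off the graph, strictly positive on it, and whose local sums over open sets
whose boundary misses the values are locally constant. -/
structure NWeightedMap (X Y : Type*) [TopologicalSpace X] [TopologicalSpace Y] where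
  toFun : X → Set Y
  weight : X → Y → ℕ
  usc : ∀ V : Set Y, IsOpen V → IsOpen {x | toFun x ⊆ V}
  finite_values : ∀ x, (toFun x).Finite
  weight_eq_zero : ∀ x y, y ∉ toFun x → weight x y = 0
  weight_pos : ∀ x y, y ∈ toFun x → 0 < weight x y
  sum_locally_const : ∀ U : Set Y, IsOpen U → ∀ x : X, toFun x ∩ frontier U = ∅ →
    ∃ V : Set X, IsOpen V ∧ x ∈ V ∧
      ∀ z ∈ V, ∑ᶠ y ∈ U, weight x y = ∑ᶠ y ∈ U, weight z y

/-- Theorem: if `X` is connected then the total weight `x ↦ Σ_{y∈Y} w_ψ(x,y)`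
of an `ℕ`-weighted map is constant on `X` (its common value is the weighted
index `I_w(ψ)`).  The boundary of `Y` in itself is automatically empty. -/
theorem NWeightedMap.total_weight_constant
    {X Y : Type*} [TopologicalSpace X] [TopologicalSpace Y] [ConnectedSpace X]
    (ψ : NWeightedMap X Y) :
    ∀ x₁ x₂ : X, ∑ᶠ y : Y, ψ.weight x₁ y = ∑ᶠ y : Y, ψ.weight x₂ y := by
  have hlc : IsLocallyConstant (fun x : X => ∑ᶠ y : Y, ψ.weight x y) := by
    rw [IsLocallyConstant.iff_exists_open]
    intro x
    obtain ⟨V, hVopen, hxV, hV⟩ := ψ.sum_locally_const Set.univ isOpen_univ x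
      (by simp [frontier_univ])
    exact ⟨V, hVopen, hxV, fun z hz => by
      simpa [finsum_mem_univ] using (hV z hz).symm⟩
  intro x₁ x₂
  exact hlc.apply_eq_of_preconnectedSpace x₁ x₂
end

section
/- Let X and Y be metric spaces and n a positive integer. Let f : X → Set Y be lower and upper semicontinuous with f(x) of cardinality exactly n for every x ∈ X. Let Γ = {(x,y) ∈ X × Y | y ∈ f(x)} with the subspace topology of the product, and let p : Γ → X be the projection p(x,y) = x. Then p is a covering map, and each fiber p^{-1}(x) has cardinality n. -/
open Set Topology

/-- A set-valued function is lower semicontinuous if `{x | f x ∩ V ≠ ∅}` is open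
for every open `V`. -/
def LowerSemicontinuousMultimap {X Y : Type*} [TopologicalSpace X] [TopologicalSpace Y]
    (f : X → Set Y) : Prop :=
  ∀ V : Set Y, IsOpen V → IsOpen {x | (f x ∩ V).Nonempty}

/-- A set-valued function is upper semicontinuous if `{x | f x ⊆ V}` is open
for every open `V`. -/
def UpperSemicontinuousMultimap {X Y : Type*} [TopologicalSpace X] [TopologicalSpace Y]
    (f : X → Set Y) : Prop :=
  ∀ V : Set Y, IsOpen V → IsOpen {x | f x ⊆ V}

open Metric
lemma exists_sep {Y : Type*} [MetricSpace Y] (s : Set Y) (hs : s.Finite) :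
    ∃ ε > (0:ℝ), ∀ a ∈ s, ∀ b ∈ s, a ≠ b → Disjoint (ball a ε) (ball b ε) := by
  classical
  set T := hs.toFinset with hT
  set P := (T ×ˢ T).filter (fun p => p.1 ≠ p.2) with hPdef
  by_cases h : P.Nonempty
  · refine ⟨(P.inf' h fun p => dist p.1 p.2) / 2, ?_, ?_⟩
    · have hpos : ∀ p ∈ P, 0 < dist p.1 p.2 := fun p hp =>
        dist_pos.2 (Finset.mem_filter.1 hp).2
      have := (Finset.lt_inf'_iff h).2 hpos
      linarith
    · intro a ha b hb hab
      apply ball_disjoint_ball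
      have hmem : (a, b) ∈ P := by
        simp only [hPdef, Finset.mem_filter, Finset.mem_product, hT, hs.mem_toFinset]
        exact ⟨⟨ha, hb⟩, hab⟩
      have := Finset.inf'_le (fun p => dist p.1 p.2) hmem
      simp only at this
      linarith
  · refine ⟨1, one_pos, fun a ha b hb hab => absurd ⟨(a, b), ?_⟩ h⟩
    simp only [hPdef, Finset.mem_filter, Finset.mem_product, hT, hs.mem_toFinset]
    exact ⟨⟨ha, hb⟩, hab⟩

/-- The trivializing construction at a point `x₀`. -/
lemma evenly_covered_at {X Y : Type*} [MetricSpace X] [MetricSpace Y] (n : ℕ) (hn : 0 < n)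
    (f : X → Set Y)
    (hlsc : LowerSemicontinuousMultimap f) (husc : UpperSemicontinuousMultimap f)
    (hfin : ∀ x, (f x).Finite) (hcard : ∀ x, (f x).ncard = n) (x₀ : X) :
    IsEvenlyCovered (fun g : {p : X × Y // p.2 ∈ f p.1} => g.1.1) x₀ ↥(f x₀) := by
  classical
  haveI : Finite ↥(f x₀) := (hfin x₀).to_subtype
  have hex : ∀ x, (f x).Nonempty := fun x =>
    Set.nonempty_of_ncard_ne_zero (by rw [hcard]; omega)
  obtain ⟨ε, hε, hdisj⟩ := exists_sep (f x₀) (hfin x₀)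
  -- the open base set
  set U : Set X := {x | f x ⊆ ⋃ a ∈ f x₀, ball a ε} ∩
      ⋂ a ∈ f x₀, {x | (f x ∩ ball a ε).Nonempty} with hUdef
  have hUopen : IsOpen U := by
    apply IsOpen.inter
    · exact husc _ (isOpen_biUnion fun a _ => isOpen_ball)
    · exact (hfin x₀).isOpen_biInter fun a _ => hlsc _ isOpen_ball
  have hx₀U : x₀ ∈ U := by
    constructor
    · intro y hy
      exact mem_biUnion hy (mem_ball_self hε)
    · exact mem_iInter₂.2 fun a ha => ⟨a, ha, mem_ball_self hε⟩
  have hUsub : ∀ x ∈ U, f x ⊆ ⋃ a ∈ f x₀, ball a ε := fun x hx => hx.1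
  have hUne : ∀ x ∈ U, ∀ a ∈ f x₀, (f x ∩ ball a ε).Nonempty := fun x hx a ha =>
    mem_iInter₂.1 hx.2 a ha
  -- the "labelling" function on Y
  set A : Y → Y := fun z =>
    if h : ∃ a ∈ f x₀, z ∈ ball a ε then h.choose else (hex x₀).choose with hAdef
  have hA1 : ∀ z, A z ∈ f x₀ := by
    intro z
    by_cases h : ∃ a ∈ f x₀, z ∈ ball a ε
    · simp only [hAdef, dif_pos h]; exact h.choose_spec.1
    · simp only [hAdef, dif_neg h]; exact (hex x₀).choose_spec
  have hA2 : ∀ a ∈ f x₀, ∀ z ∈ ball a ε, A z = a := by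
    intro a ha z hz
    have h : ∃ a ∈ f x₀, z ∈ ball a ε := ⟨a, ha, hz⟩
    have hz' : z ∈ ball (A z) ε := by
      simp only [hAdef, dif_pos h]; exact h.choose_spec.2
    by_contra hne
    exact (hdisj _ (hA1 z) _ ha hne).ne_of_mem hz' hz rfl
  -- uniqueness of the point of `f x` in each ball
  have huniq : ∀ x ∈ U, ∀ a ∈ f x₀, ∀ z₁ ∈ f x ∩ ball a ε, ∀ z₂ ∈ f x ∩ ball a ε, z₁ = z₂ := by
    intro x hx a ha z₁ hz₁ z₂ hz₂
    exact Set.inj_on_of_surj_on_of_ncard_le (s := f x) (t := f x₀)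
      (fun z _ => A z) (fun z _ => hA1 z)
      (fun b hb => by
        obtain ⟨z, hzf, hzb⟩ := hUne x hx b hb
        exact ⟨z, hzf, hA2 b hb z hzb⟩)
      (by rw [hcard, hcard]) hz₁.1 hz₂.1
      ((hA2 a ha z₁ hz₁.2).trans (hA2 a ha z₂ hz₂.2).symm) (hfin x)
  -- the selection function
  set G : X → Y → Y := fun x a =>
    if h : (f x ∩ ball a ε).Nonempty then h.choose else (hex x).choose with hGdef
  have hG_mem : ∀ x a, G x a ∈ f x := by
    intro x a
    by_cases h : (f x ∩ ball a ε).Nonempty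
    · simp only [hGdef, dif_pos h]; exact h.choose_spec.1
    · simp only [hGdef, dif_neg h]; exact (hex x).choose_spec
  have hG_ball : ∀ x ∈ U, ∀ a ∈ f x₀, G x a ∈ ball a ε := by
    intro x hx a ha
    have h := hUne x hx a ha
    simp only [hGdef, dif_pos h]
    exact h.choose_spec.2
  have hG_uniq : ∀ x ∈ U, ∀ a ∈ f x₀, ∀ z ∈ f x ∩ ball a ε, z = G x a := by
    intro x hx a ha z hz
    exact huniq x hx a ha z hz (G x a) ⟨hG_mem x a, hG_ball x hx a ha⟩
  -- the trivialization
  have hcontF : ContinuousOn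
      (fun g : {p : X × Y // p.2 ∈ f p.1} => ((g.1.1, ⟨A g.1.2, hA1 g.1.2⟩) : X × ↥(f x₀)))
      ((fun g : {p : X × Y // p.2 ∈ f p.1} => g.1.1) ⁻¹' U) := by
    intro g hg
    apply ContinuousAt.continuousWithinAt
    have hy : g.1.2 ∈ ⋃ a ∈ f x₀, ball a ε := hUsub _ hg g.2
    obtain ⟨a, ha, hball⟩ := mem_iUnion₂.1 hy
    have hev : (fun h : {p : X × Y // p.2 ∈ f p.1} => ((h.1.1, ⟨a, ha⟩) : X × ↥(f x₀)))
        =ᶠ[nhds g] (fun h => (h.1.1, ⟨A h.1.2, hA1 h.1.2⟩)) := by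
      have hopen : IsOpen {h : {p : X × Y // p.2 ∈ f p.1} | h.1.2 ∈ ball a ε} :=
        isOpen_ball.preimage (continuous_snd.comp continuous_subtype_val)
      filter_upwards [hopen.mem_nhds hball] with h hh
      exact Prod.ext rfl (Subtype.ext (hA2 a ha _ hh).symm)
    exact ContinuousAt.congr
      (((continuous_fst.comp continuous_subtype_val).prodMk continuous_const).continuousAt) hev
  have hcontG : ContinuousOn
      (fun q : X × ↥(f x₀) => (⟨(q.1, G q.1 q.2), hG_mem q.1 q.2⟩ : {p : X × Y // p.2 ∈ f p.1}))
      (U ×ˢ univ) := by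
    rintro ⟨x, a, ha⟩ ⟨hx, -⟩
    apply ContinuousAt.continuousWithinAt
    rw [ContinuousAt, tendsto_subtype_rng]
    refine Filter.Tendsto.prodMk_nhds continuousAt_fst ?_
    rw [Metric.tendsto_nhds]
    intro δ hδ
    have hW : IsOpen {x' | (f x' ∩ (ball a ε ∩ ball (G x a) δ)).Nonempty} :=
      hlsc _ (isOpen_ball.inter isOpen_ball)
    have hxW : x ∈ {x' | (f x' ∩ (ball a ε ∩ ball (G x a) δ)).Nonempty} :=
      ⟨G x a, hG_mem x a, hG_ball x hx a ha, mem_ball_self hδ⟩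
    have hmem : ({x' | (f x' ∩ (ball a ε ∩ ball (G x a) δ)).Nonempty} ∩ U) ×ˢ
        ({⟨a, ha⟩} : Set ↥(f x₀)) ∈ nhds ((x, ⟨a, ha⟩) : X × ↥(f x₀)) :=
      prod_mem_nhds ((hW.inter hUopen).mem_nhds ⟨hxW, hx⟩)
        ((isOpen_discrete _).mem_nhds rfl)
    filter_upwards [hmem]
    rintro ⟨x', b⟩ ⟨⟨⟨z, hzf, hzb, hzd⟩, hx'U⟩, hb⟩
    simp only [mem_singleton_iff] at hb
    subst hb
    have hzG : z = G x' a := hG_uniq x' hx'U a ha z ⟨hzf, hzb⟩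
    simpa [hzG] using hzd
  refine IsEvenlyCovered.of_trivialization (t :=
    ({ toFun := fun g => (g.1.1, ⟨A g.1.2, hA1 g.1.2⟩)
       invFun := fun q => ⟨(q.1, G q.1 q.2), hG_mem q.1 q.2⟩
       source := (fun g : {p : X × Y // p.2 ∈ f p.1} => g.1.1) ⁻¹' U
       target := U ×ˢ univ
       map_source' := ?_
       map_target' := ?_
       left_inv' := ?_
       right_inv' := ?_
       open_source := hUopen.preimage (continuous_fst.comp continuous_subtype_val)
       open_target := hUopen.prod isOpen_univ
       continuousOn_toFun := hcontF
       continuousOn_invFun := hcontG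
       baseSet := U
       open_baseSet := hUopen
       source_eq := rfl
       target_eq := rfl
       proj_toFun := fun _ _ => rfl })) hx₀U
  · -- map_source'
    intro g hg; exact ⟨hg, mem_univ _⟩
  · -- map_target'
    intro q hq; exact hq.1
  · -- left_inv'
    intro g hg
    apply Subtype.ext
    have hy : g.1.2 ∈ ⋃ a ∈ f x₀, ball a ε := hUsub _ hg g.2
    obtain ⟨a, ha, hball⟩ := mem_iUnion₂.1 hy
    have hAa : A g.1.2 = a := hA2 a ha _ hball
    have hGg : g.1.2 = G g.1.1 (A g.1.2) := by
      rw [hAa]; exact hG_uniq _ hg a ha _ ⟨g.2, hball⟩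
    exact Prod.ext rfl hGg.symm
  · -- right_inv'
    rintro ⟨x, a, ha⟩ ⟨hx, -⟩
    refine Prod.ext rfl (Subtype.ext ?_)
    exact hA2 a ha _ (hG_ball x hx a ha)

/-- Theorem: if `f : X → Set Y` is an exactly `n`-valued lower and upper
semicontinuous map between metric spaces, then the projection
`p : Γ → X`, `p(x,y) = x`, from the graph
`Γ = {(x,y) | y ∈ f(x)}` (with the subspace topology of the product) is a
covering map, and each fiber `p⁻¹(x)` has cardinality `n`. -/
theorem graph_projection_isCoveringMap
    {X Y : Type*} [MetricSpace X] [MetricSpace Y] (n : ℕ) (hn : 0 < n)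
    (f : X → Set Y)
    (hlsc : LowerSemicontinuousMultimap f) (husc : UpperSemicontinuousMultimap f)
    (hfin : ∀ x, (f x).Finite) (hcard : ∀ x, (f x).ncard = n) :
    IsCoveringMap (fun g : {p : X × Y // p.2 ∈ f p.1} => g.1.1) ∧
      ∀ x : X, ((fun g : {p : X × Y // p.2 ∈ f p.1} => g.1.1) ⁻¹' {x}).ncard = n := by
  have hfiber : ∀ x : X,
      ((fun g : {p : X × Y // p.2 ∈ f p.1} => g.1.1) ⁻¹' {x}).ncard = n := by
    intro x
    have himg : (fun g : {p : X × Y // p.2 ∈ f p.1} => g.1.1) ⁻¹' {x} =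
        (fun z : ↥(f x) => (⟨(x, z.1), z.2⟩ : {p : X × Y // p.2 ∈ f p.1})) '' univ := by
      ext g
      constructor
      · intro hg
        simp only [mem_preimage, mem_singleton_iff] at hg
        exact ⟨⟨g.1.2, hg ▸ g.2⟩, mem_univ _, Subtype.ext (Prod.ext hg.symm rfl)⟩
      · rintro ⟨z, -, rfl⟩
        rfl
    have hinj : Function.Injective
        (fun z : ↥(f x) => (⟨(x, z.1), z.2⟩ : {p : X × Y // p.2 ∈ f p.1})) := by
      intro z₁ z₂ h
      apply Subtype.ext
      simpa [Subtype.ext_iff, Prod.ext_iff] using h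
    rw [himg, Set.ncard_image_of_injective _ hinj, Set.ncard_univ,
      Nat.card_coe_set_eq, hcard]
  exact ⟨fun x₀ => (evenly_covered_at n hn f hlsc husc hfin hcard x₀).to_isEvenlyCovered_preimage,
    hfiber⟩
end

section
/- Let X and Y be metric spaces, let n_1, …, n_k be positive integers with n_1 + ⋯ + n_k = n, and for each i let f_i : X → Set Y be a lower and upper semicontinuous set-valued map with f_i(x) of cardinality exactly n_i for every x. Define f(x) = f_1(x) ∪ ⋯ ∪ f_k(x). Then there exist a topological space X̂, a covering map p : X̂ → X each of whose fibers has cardinality n, and a continuous map f̂ : X̂ → Y such that f̂(p^{-1}(x)) = f(x) for every x ∈ X. (That is, every union of equicardinal maps is an n-fold map in the sense of Crabb.) -/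
open Set Topology

universe u v

lemma counting_lemma {A Z : Type*} {S : Set Z} {T : Set A} {W : A → Set Z}
    (hS : S.Finite) (hT : T.Finite) (hcard : S.ncard = T.ncard)
    (hdisj : T.PairwiseDisjoint W) (hcov : S ⊆ ⋃ z ∈ T, W z)
    (hne : ∀ z ∈ T, (S ∩ W z).Nonempty) :
    ∀ z ∈ T, ∃! s, s ∈ S ∩ W z := by
  have huz : ∀ s ∈ S, ∀ z ∈ T, ∀ z' ∈ T, s ∈ W z → s ∈ W z' → z = z' := by
    intro s _ z hz z' hz' h1 h2
    by_contra hne'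
    exact (hdisj hz hz' hne').le_bot ⟨h1, h2⟩ |>.elim
  have hc : ∀ s : S, ∃ z : T, (s : Z) ∈ W z := by
    intro s
    obtain ⟨z, hz, hsz⟩ := mem_iUnion₂.mp (hcov s.2)
    exact ⟨⟨z, hz⟩, hsz⟩
  choose c hcW using hc
  haveI := hS.fintype
  haveI := hT.fintype
  have hsurj : Function.Surjective c := by
    intro z
    obtain ⟨s, hsS, hsW⟩ := hne z z.2
    refine ⟨⟨s, hsS⟩, ?_⟩
    exact Subtype.ext (huz s hsS _ (c ⟨s, hsS⟩).2 z z.2 (hcW ⟨s, hsS⟩) hsW)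
  have hcards : Fintype.card S = Fintype.card T := by
    rw [← Nat.card_eq_fintype_card, ← Nat.card_eq_fintype_card,
      Nat.card_coe_set_eq, Nat.card_coe_set_eq, hcard]
  have hbij : Function.Bijective c :=
    (Fintype.bijective_iff_surjective_and_card c).mpr ⟨hsurj, hcards⟩
  intro z hz
  obtain ⟨s, hsS, hsW⟩ := hne z hz
  refine ⟨s, ⟨hsS, hsW⟩, ?_⟩
  intro s' ⟨hs'S, hs'W⟩
  have h1 : c ⟨s', hs'S⟩ = ⟨z, hz⟩ :=
    Subtype.ext (huz s' hs'S _ (c ⟨s', hs'S⟩).2 z hz (hcW ⟨s', hs'S⟩) hs'W)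
  have h2 : c ⟨s, hsS⟩ = ⟨z, hz⟩ :=
    Subtype.ext (huz s hsS _ (c ⟨s, hsS⟩).2 z hz (hcW ⟨s, hsS⟩) hsW)
  exact Subtype.ext_iff.mp (hbij.1 (h1.trans h2.symm))

lemma exists_graph_trivialization {X Z : Type*} [TopologicalSpace X] [TopologicalSpace Z]
    [T2Space Z] (n : ℕ) (hn : 0 < n) (F : X → Set Z)
    (hl : LowerSemicontinuousMultimap F) (hu : UpperSemicontinuousMultimap F)
    (hfin : ∀ x, (F x).Finite) (hc : ∀ x, (F x).ncard = n) (x0 : X) :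
    ∃ t : Bundle.Trivialization (↥(F x0)) (fun e : {z : X × Z // z.2 ∈ F z.1} => e.1.1),
      x0 ∈ t.baseSet := by
  classical
  obtain ⟨W, hW, hWd⟩ := (hfin x0).t2_separation
  have hne0 : (F x0).Nonempty := Set.nonempty_of_ncard_ne_zero (by rw [hc]; omega)
  obtain ⟨z0, hz0⟩ := hne0
  haveI : Finite ↥(F x0) := (hfin x0).to_subtype
  -- uniqueness of the separating set containing a point
  have huz : ∀ s : Z, ∀ z ∈ F x0, ∀ z' ∈ F x0, s ∈ W z → s ∈ W z' → z = z' := by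
    intro s z hz z' hz' h1 h2
    by_contra hne'
    exact (hWd hz hz' hne').le_bot ⟨h1, h2⟩ |>.elim
  -- the good neighborhood
  set U : Set X := {x | F x ⊆ ⋃ z ∈ F x0, W z} ∩ ⋂ z ∈ F x0, {x | (F x ∩ W z).Nonempty}
    with hUdef
  have hUopen : IsOpen U :=
    (hu _ (isOpen_biUnion fun z _ => (hW z).2)).inter
      ((hfin x0).isOpen_biInter fun z _ => hl _ (hW z).2)
  have hUmem : ∀ x ∈ U, (F x ⊆ ⋃ z ∈ F x0, W z) ∧ ∀ z ∈ F x0, (F x ∩ W z).Nonempty := by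
    intro x hx
    exact ⟨hx.1, fun z hz => mem_iInter₂.mp hx.2 z hz⟩
  have hx0U : x0 ∈ U :=
    ⟨fun s hs => mem_biUnion hs (hW s).1, mem_iInter₂.mpr fun z hz => ⟨z, hz, (hW z).1⟩⟩
  have key : ∀ x ∈ U, ∀ z ∈ F x0, ∃! s, s ∈ F x ∩ W z := fun x hx =>
    counting_lemma (hfin x) (hfin x0) (by rw [hc, hc]) hWd (hUmem x hx).1 (hUmem x hx).2
  have keycls : ∀ x ∈ U, ∀ s ∈ F x, ∃ z : ↥(F x0), s ∈ W z := by
    intro x hx s hs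
    obtain ⟨z, hz, hsz⟩ := mem_iUnion₂.mp ((hUmem x hx).1 hs)
    exact ⟨⟨z, hz⟩, hsz⟩
  -- selection function
  set sel : X → Z → Z := fun x z => if h : (F x ∩ W z).Nonempty then h.choose else z0
    with hseldef
  have hselmem : ∀ x z, (F x ∩ W z).Nonempty → sel x z ∈ F x ∩ W z := by
    intro x z h
    simp only [hseldef, dif_pos h]
    exact h.choose_spec
  have hseluniq : ∀ x ∈ U, ∀ z ∈ F x0, ∀ s ∈ F x ∩ W z, s = sel x z := by
    intro x hx z hz s hs
    obtain ⟨s₀, _, hus⟩ := key x hx z hz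
    rw [hus s hs, hus (sel x z) (hselmem x z ⟨s, hs⟩)]
  -- classification function
  set cls : Z → ↥(F x0) := fun s => if h : ∃ z : ↥(F x0), s ∈ W z then h.choose else ⟨z0, hz0⟩
    with hclsdef
  have hclsmem : ∀ s : Z, (∃ z : ↥(F x0), s ∈ W z) → s ∈ W ↑(cls s) := by
    intro s h
    simp only [hclsdef, dif_pos h]
    exact h.choose_spec
  have hclsuniq : ∀ (s : Z) (z : ↥(F x0)), s ∈ W ↑z → cls s = z := by
    intro s z hs
    exact Subtype.ext (huz s _ (cls s).2 _ z.2 (hclsmem s ⟨z, hs⟩) hs)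
  -- the trivialization
  refine ⟨{ toFun := fun e => (e.1.1, cls e.1.2)
            invFun := fun q => if h : q.1 ∈ U then
                ⟨(q.1, sel q.1 ↑q.2), (hselmem q.1 ↑q.2 ((hUmem q.1 h).2 ↑q.2 q.2.2)).1⟩
              else ⟨(x0, z0), hz0⟩
            source := (fun e : {z : X × Z // z.2 ∈ F z.1} => e.1.1) ⁻¹' U
            target := U ×ˢ univ
            map_source' := fun e he => ⟨he, mem_univ _⟩
            map_target' := ?_
            left_inv' := ?_
            right_inv' := ?_
            open_source := hUopen.preimage (continuous_fst.comp continuous_subtype_val)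
            open_target := hUopen.prod isOpen_univ
            continuousOn_toFun := ?_
            continuousOn_invFun := ?_
            baseSet := U
            open_baseSet := hUopen
            source_eq := rfl
            target_eq := rfl
            proj_toFun := fun e _ => rfl }, hx0U⟩
  · -- map_target'
    intro q hq
    simp only [dif_pos hq.1]
    exact hq.1
  · -- left_inv'
    intro e he
    simp only [dif_pos (show e.1.1 ∈ U from he)]
    refine Subtype.ext (Prod.ext rfl ?_)
    exact (hseluniq e.1.1 he ↑(cls e.1.2) (cls e.1.2).2 e.1.2
      ⟨e.2, hclsmem e.1.2 (keycls e.1.1 he e.1.2 e.2)⟩).symm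
  · -- right_inv'
    intro q hq
    simp only [dif_pos hq.1]
    refine Prod.ext rfl ?_
    exact hclsuniq (sel q.1 ↑q.2) q.2 (hselmem q.1 ↑q.2 ((hUmem q.1 hq.1).2 ↑q.2 q.2.2)).2
  · -- continuousOn_toFun
    apply ContinuousOn.prodMk (continuous_fst.comp continuous_subtype_val).continuousOn
    intro e he
    have hOopen : IsOpen {e' : {z : X × Z // z.2 ∈ F z.1} | e'.1.2 ∈ W ↑(cls e.1.2)} :=
      (hW _).2.preimage (continuous_snd.comp continuous_subtype_val)
    have heO : e.1.2 ∈ W ↑(cls e.1.2) := hclsmem e.1.2 (keycls e.1.1 he e.1.2 e.2)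
    refine ContinuousWithinAt.congr_of_eventuallyEq continuousWithinAt_const ?_ rfl
    filter_upwards [nhdsWithin_le_nhds (hOopen.mem_nhds heO), self_mem_nhdsWithin]
      with e' hO' hsrc
    exact hclsuniq e'.1.2 (cls e.1.2) hO'
  · -- continuousOn_invFun
    refine IsInducing.subtypeVal.continuousOn_iff.mpr ?_
    have heq : EqOn
        (Subtype.val ∘ fun q : X × ↥(F x0) => if h : q.1 ∈ U then
            (⟨(q.1, sel q.1 ↑q.2), (hselmem q.1 ↑q.2 ((hUmem q.1 h).2 ↑q.2 q.2.2)).1⟩ :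
              {z : X × Z // z.2 ∈ F z.1})
          else ⟨(x0, z0), hz0⟩)
        (fun q : X × ↥(F x0) => (q.1, sel q.1 ↑q.2)) (U ×ˢ univ) := by
      intro q hq
      simp only [Function.comp, dif_pos hq.1]
    refine ContinuousOn.congr ?_ heq
    apply ContinuousOn.prodMk continuous_fst.continuousOn
    intro q hq
    have hmem : sel q.1 ↑q.2 ∈ F q.1 ∩ W ↑q.2 :=
      hselmem q.1 ↑q.2 ((hUmem q.1 hq.1).2 ↑q.2 q.2.2)
    rw [ContinuousWithinAt, tendsto_nhds]
    intro V hV haV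
    have hO'open : IsOpen (({x | (F x ∩ (V ∩ W ↑q.2)).Nonempty} ∩ U) ×ˢ
        ({q.2} : Set ↥(F x0))) :=
      ((hl _ (hV.inter (hW _).2)).inter hUopen).prod (isOpen_discrete _)
    have hqO' : q ∈ ({x | (F x ∩ (V ∩ W ↑q.2)).Nonempty} ∩ U) ×ˢ
        ({q.2} : Set ↥(F x0)) :=
      ⟨⟨⟨sel q.1 ↑q.2, hmem.1, haV, hmem.2⟩, hq.1⟩, rfl⟩
    filter_upwards [nhdsWithin_le_nhds (hO'open.mem_nhds hqO')] with q' hq'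
    obtain ⟨⟨⟨s, hsF, hsV, hsW⟩, hq'U⟩, hq'2⟩ := hq'
    have hq'2' : q'.2 = q.2 := hq'2
    show sel q'.1 ↑q'.2 ∈ V
    rw [hq'2']
    rw [← hseluniq q'.1 hq'U ↑q.2 q.2.2 s ⟨hsF, hsW⟩]
    exact hsV


/-- Theorem: a union of equicardinal maps is an `n`-fold map in the sense of
Crabb.  Given `n_i`-valued lower and upper semicontinuous maps `f_i : X ⊸ Y`
(`i = 1,…,k`) with `n_1 + ⋯ + n_k = n`, there exist a topological space `X̂`, a
covering map `p : X̂ → X` all of whose fibers have cardinality `n`, and a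
continuous map `f̂ : X̂ → Y` with `f̂(p⁻¹(x)) = f_1(x) ∪ ⋯ ∪ f_k(x)` for all `x`. -/
theorem union_equicardinal_isNFold
    {X : Type u} {Y : Type v} [MetricSpace X] [MetricSpace Y]
    (n k : ℕ) (hk : 0 < k) (m : Fin k → ℕ) (hm : ∀ i, 0 < m i)
    (hsum : ∑ i, m i = n)
    (f : Fin k → X → Set Y)
    (hlsc : ∀ i, LowerSemicontinuousMultimap (f i))
    (husc : ∀ i, UpperSemicontinuousMultimap (f i))
    (hfin : ∀ i x, (f i x).Finite) (hcard : ∀ i x, (f i x).ncard = m i) :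
    ∃ (Xh : Type (max u v)) (tXh : TopologicalSpace Xh) (p : Xh → X) (fh : Xh → Y),
      @IsCoveringMap Xh X tXh _ p ∧
      (∀ x : X, (p ⁻¹' {x}).ncard = n) ∧
      @Continuous Xh Y tXh _ fh ∧
      ∀ x : X, fh '' (p ⁻¹' {x}) = ⋃ i, f i x := by
  classical
  haveI : Nonempty (Fin k) := ⟨⟨0, hk⟩⟩
  have hn : 0 < n := by
    rw [← hsum]
    exact Finset.sum_pos (fun i _ => hm i) Finset.univ_nonempty
  set F : X → Set (Y × ℕ) := fun x => ⋃ i : Fin k, (f i x) ×ˢ ({(i : ℕ)} : Set ℕ) with hF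
  have hmemF : ∀ (x : X) (y : Y) (j : ℕ),
      ((y, j) ∈ F x ↔ ∃ i : Fin k, y ∈ f i x ∧ (i : ℕ) = j) := by
    intro x y j
    simp only [hF, mem_iUnion, Set.mem_prod, mem_singleton_iff, eq_comm]
  have hlF : LowerSemicontinuousMultimap F := by
    intro V hV
    have hrw : {x | (F x ∩ V).Nonempty}
        = ⋃ i : Fin k, {x | (f i x ∩ {y | (y, (i : ℕ)) ∈ V}).Nonempty} := by
      ext x
      simp only [mem_setOf_eq, mem_iUnion]
      constructor
      · rintro ⟨⟨y, j⟩, hmem, hV'⟩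
        obtain ⟨i, hy, hij⟩ := (hmemF x y j).mp hmem
        subst hij
        exact ⟨i, y, hy, hV'⟩
      · rintro ⟨i, y, hy, hyV⟩
        exact ⟨(y, (i : ℕ)), (hmemF x y i).mpr ⟨i, hy, rfl⟩, hyV⟩
    rw [hrw]
    exact isOpen_iUnion fun i =>
      hlsc i _ (hV.preimage (continuous_id.prodMk continuous_const))
  have huF : UpperSemicontinuousMultimap F := by
    intro V hV
    have hrw : {x | F x ⊆ V} = ⋂ i : Fin k, {x | f i x ⊆ {y | (y, (i : ℕ)) ∈ V}} := by
      ext x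
      simp only [mem_setOf_eq, mem_iInter, hF, iUnion_subset_iff]
      refine forall_congr' fun i => ?_
      constructor
      · intro h y hy
        exact h ⟨hy, rfl⟩
      · rintro h ⟨y, j⟩ ⟨hy, hj⟩
        rw [mem_singleton_iff] at hj
        subst hj
        exact h hy
    rw [hrw]
    exact isOpen_iInter_of_finite fun i =>
      husc i _ (hV.preimage (continuous_id.prodMk continuous_const))
  have hfinF : ∀ x, (F x).Finite := fun x =>
    finite_iUnion fun i => (hfin i x).prod (finite_singleton _)
  have hcF : ∀ x, (F x).ncard = n := by
    intro x
    have hrw : F x = ↑(Finset.univ.biUnion fun i : Fin k =>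
        (hfin i x).toFinset.image fun y => (y, (i : ℕ))) := by
      ext ⟨y, j⟩
      simp only [Finset.coe_biUnion, Finset.coe_univ, mem_univ, iUnion_true,
        Finset.coe_image, Set.Finite.coe_toFinset, mem_iUnion, mem_image,
        hmemF, Prod.mk.injEq]
      constructor
      · rintro ⟨i, hy, hij⟩
        exact ⟨i, y, hy, rfl, hij⟩
      · rintro ⟨i, y', hy', rfl, hij⟩
        exact ⟨i, hy', hij⟩
    rw [hrw, Set.ncard_coe_finset, Finset.card_biUnion, ← hsum]
    · refine Finset.sum_congr rfl fun i _ => ?_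
      rw [Finset.card_image_of_injective _ (fun a b hab => (Prod.mk.injEq _ _ _ _ ▸ hab).1),
        ← Set.ncard_eq_toFinset_card _ (hfin i x), hcard]
    · intro a _ b _ hab
      rw [Function.onFun, Finset.disjoint_left]
      rintro ⟨y, j⟩ ha hb
      simp only [Finset.mem_image, Set.Finite.mem_toFinset, Prod.mk.injEq] at ha hb
      obtain ⟨_, _, _, rfl⟩ := ha
      obtain ⟨_, _, _, hba⟩ := hb
      exact hab (Fin.val_injective hba).symm
  refine ⟨{z : X × (Y × ℕ) // z.2 ∈ F z.1}, inferInstance,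
    fun e => e.1.1, fun e => e.1.2.1, ?_, ?_, ?_, ?_⟩
  · -- covering map
    choose t ht using exists_graph_trivialization n hn F hlF huF hfinF hcF
    exact @IsCoveringMap.mk _ _ _ _ _ (fun x => ↥(F x)) _
      (fun x => @Finite.instDiscreteTopology _ _ _ (hfinF x).to_subtype) t ht
  · -- fiber cardinality
    intro x
    have hinj : InjOn (fun e : {z : X × (Y × ℕ) // z.2 ∈ F z.1} => e.1.2)
        ((fun e : {z : X × (Y × ℕ) // z.2 ∈ F z.1} => e.1.1) ⁻¹' {x}) := by
      intro e he e' he' hee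
      exact Subtype.ext (Prod.ext ((he : e.1.1 = x).trans (he' : e'.1.1 = x).symm) hee)
    have himg : (fun e : {z : X × (Y × ℕ) // z.2 ∈ F z.1} => e.1.2) ''
        ((fun e : {z : X × (Y × ℕ) // z.2 ∈ F z.1} => e.1.1) ⁻¹' {x}) = F x := by
      ext z
      constructor
      · rintro ⟨e, he, rfl⟩
        exact (he : e.1.1 = x) ▸ e.2
      · intro hz
        exact ⟨⟨(x, z), hz⟩, rfl, rfl⟩
    rw [← Set.ncard_image_of_injOn hinj, himg, hcF]
  · -- continuity of fh
    exact continuous_fst.comp (continuous_snd.comp continuous_subtype_val)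
  · -- image of fibers
    intro x
    ext y
    simp only [mem_image, mem_preimage, mem_singleton_iff, mem_iUnion]
    constructor
    · rintro ⟨e, he, rfl⟩
      have h2 : e.1.2 ∈ F x := (he : e.1.1 = x) ▸ e.2
      obtain ⟨i, hy, _⟩ := (hmemF x e.1.2.1 e.1.2.2).mp (by
        rw [show (e.1.2.1, e.1.2.2) = e.1.2 from rfl]; exact h2)
      exact ⟨i, hy⟩
    · rintro ⟨i, hy⟩
      exact ⟨⟨(x, (y, (i : ℕ))), (hmemF x y i).mpr ⟨i, hy, rfl⟩⟩, rfl, rfl⟩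
end

section
/- Let ℝP² be the quotient of the unit sphere S² ⊆ ℝ³ by the antipodal identification, with quotient map [·], and let f : ℝP² → Set S² be the at-most-2-valued map f([(x,y,z)]) = {(x,y,|z|), (−x,−y,|z|)}. Then f is not a union of equicardinal maps: (a) f is not exactly 2-valued (there exist points whose image has cardinality 1), and (b) there do not exist continuous single-valued maps g, h : ℝP² → S² with g(ξ) ∪ h(ξ) = f(ξ) for all ξ ∈ ℝP². Hence the class of at-most-n-valued maps realized by Crabb's n-fold maps strictly contains the class realized by unions of equicardinal maps. -/
open Set Topology

noncomputable section

/-- Euclidean 3-space. -/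
abbrev E3 : Type := EuclideanSpace ℝ (Fin 3)

/-- The unit 2-sphere in `ℝ³`. -/
abbrev Sph2 : Type := Metric.sphere (0 : E3) 1

/-- The real projective plane: the quotient of the unit sphere `S² ⊆ ℝ³` by the
antipodal identification (as a quotient of the relation `a ~ -a`, with the
quotient topology). -/
abbrev RP2 : Type := Quot (fun a b : Sph2 => (a : E3) = -(b : E3))

/-- The map `(x,y,z) ↦ (x,y,|z|)` on `ℝ³`. -/
def absLast (v : E3) : E3 := WithLp.toLp 2 (fun i => if i = 2 then |v 2| else v i)

/-- auxiliary: equator curve -/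
def vfun (t : ℝ) : E3 := WithLp.toLp 2 ![Real.cos t, Real.sin t, 0]

lemma vfun_mem (t : ℝ) : vfun t ∈ Metric.sphere (0 : E3) 1 := by
  rw [mem_sphere_zero_iff_norm, EuclideanSpace.norm_eq]
  have : ∑ i : Fin 3, ‖vfun t i‖ ^ 2 = 1 := by
    simp [Fin.sum_univ_three, vfun, Real.norm_eq_abs, sq_abs]
    
  rw [this, Real.sqrt_one]

lemma continuous_vfun : Continuous vfun := by
  have h : Continuous fun t => (![Real.cos t, Real.sin t, (0 : ℝ)] : Fin 3 → ℝ) := by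
    apply continuous_pi; intro i
    fin_cases i <;> simp <;> continuity
  exact (PiLp.continuous_toLp 2 (fun _ : Fin 3 => ℝ)).comp h

def nvec : E3 := WithLp.toLp 2 (![0, 0, 1] : Fin 3 → ℝ)

lemma nvec_mem : nvec ∈ Metric.sphere (0 : E3) 1 := by
  rw [mem_sphere_zero_iff_norm, EuclideanSpace.norm_eq]
  have : ∑ i : Fin 3, ‖nvec i‖ ^ 2 = 1 := by
    simp [Fin.sum_univ_three, nvec]
  rw [this, Real.sqrt_one]

/-- Theorem: the at-most-2-valued map `f : ℝP² ⊸ S²`,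
`f([(x,y,z)]) = {(x,y,|z|), (−x,−y,|z|)}` (which is `f̄ ∘ p⁻¹` for the standard
double cover `p : S² → ℝP²` and `f̄(x,y,z) = (x,y,|z|)`), is not a union of
equicardinal maps: (a) it is not exactly 2-valued — some value is a singleton —
and (b) it is not the pointwise union of two continuous single-valued maps
`g, h : ℝP² → S²`. -/
theorem nfold_map_not_union_of_equicardinal
    (f : RP2 → Set Sph2)
    (hf : ∀ v : Sph2, f (Quot.mk _ v) =
      {w : Sph2 | (w : E3) = absLast (v : E3) ∨ (w : E3) = absLast (-(v : E3))}) :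
    (∃ ξ : RP2, (f ξ).ncard = 1) ∧
      ¬ ∃ g h : RP2 → Sph2, Continuous g ∧ Continuous h ∧
          ∀ ξ : RP2, ({g ξ} : Set Sph2) ∪ {h ξ} = f ξ := by
  constructor
  · -- part (a): the north pole has a singleton image
    refine ⟨Quot.mk _ ⟨nvec, nvec_mem⟩, ?_⟩
    rw [hf]
    have h1 : absLast nvec = nvec := by
      ext i; fin_cases i <;> simp [absLast, nvec]
    have h2 : absLast (-nvec) = nvec := by
      ext i; fin_cases i <;> simp [absLast, nvec]
    have : {w : Sph2 | (w : E3) = absLast ((⟨nvec, nvec_mem⟩ : Sph2) : E3) ∨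
        (w : E3) = absLast (-((⟨nvec, nvec_mem⟩ : Sph2) : E3))} =
        {(⟨nvec, nvec_mem⟩ : Sph2)} := by
      ext w
      simp only [mem_setOf_eq, mem_singleton_iff, h1, h2, or_self]
      constructor
      · intro hw; exact Subtype.ext hw
      · intro hw; rw [hw]
    rw [this, Set.ncard_singleton]
  · -- part (b): no continuous decomposition
    rintro ⟨g, h, hg, hch, hgh⟩
    set γ : ℝ → RP2 := fun t => Quot.mk _ (⟨vfun t, vfun_mem t⟩ : Sph2) with hγdef
    have hγ : Continuous γ :=
      (continuous_quot_mk).comp (Continuous.subtype_mk continuous_vfun _)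
    have hgmem : ∀ t : ℝ, (g (γ t) : E3) = absLast (vfun t) ∨
        (g (γ t) : E3) = absLast (-(vfun t)) := by
      intro t
      have hm : g (γ t) ∈ f (γ t) := by
        rw [← hgh (γ t)]; exact Set.mem_union_left _ rfl
      rw [hγdef, hf] at hm
      exact hm
    set s : ℝ → ℝ := fun t => (g (γ t) : E3) 0 * Real.cos t + (g (γ t) : E3) 1 * Real.sin t
      with hsdef
    have hcoord : ∀ i : Fin 3, Continuous fun t => (g (γ t) : E3) i := by
      intro i
      exact (continuous_apply i).comp
        ((PiLp.continuous_ofLp 2 (fun _ : Fin 3 => ℝ)).comp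
          (continuous_subtype_val.comp (hg.comp hγ)))
    have hs : Continuous s := by
      exact ((hcoord 0).mul Real.continuous_cos).add ((hcoord 1).mul Real.continuous_sin)
    have hpm : ∀ t : ℝ, s t = 1 ∨ s t = -1 := by
      intro t
      rcases hgmem t with hv | hv
      · left
        have h0 : (g (γ t) : E3) 0 = Real.cos t := by rw [hv]; simp [absLast, vfun]
        have h1 : (g (γ t) : E3) 1 = Real.sin t := by rw [hv]; simp [absLast, vfun]
        simp only [hsdef, h0, h1]
        nlinarith [Real.sin_sq_add_cos_sq t]
      · right
        have h0 : (g (γ t) : E3) 0 = -Real.cos t := by rw [hv]; simp [absLast, vfun]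
        have h1 : (g (γ t) : E3) 1 = -Real.sin t := by rw [hv]; simp [absLast, vfun]
        simp only [hsdef, h0, h1]
        nlinarith [Real.sin_sq_add_cos_sq t]
    have hloop : γ Real.pi = γ 0 := by
      apply Quot.sound
      show (vfun Real.pi : E3) = -(vfun 0 : E3)
      ext i; fin_cases i <;> simp [vfun]
    have hs0 : s 0 = (g (γ 0) : E3) 0 := by simp [hsdef]
    have hspi : s Real.pi = -(s 0) := by
      simp [hsdef, hloop, Real.cos_pi, Real.sin_pi]
    obtain ⟨t, -, ht⟩ : ∃ t ∈ Icc (0 : ℝ) Real.pi, s t = 0 := by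
      rcases hpm 0 with h0 | h0
      · have key := intermediate_value_Icc' (le_of_lt Real.pi_pos) hs.continuousOn
        have : (0 : ℝ) ∈ Icc (s Real.pi) (s 0) := by
          rw [hspi, h0]; norm_num
        obtain ⟨t, htm, hst⟩ := key this
        exact ⟨t, htm, hst⟩
      · have key := intermediate_value_Icc (le_of_lt Real.pi_pos) hs.continuousOn
        have : (0 : ℝ) ∈ Icc (s 0) (s Real.pi) := by
          rw [hspi, h0]; norm_num
        obtain ⟨t, htm, hst⟩ := key this
        exact ⟨t, htm, hst⟩
    rcases hpm t with h1 | h1 <;> rw [ht] at h1 <;> norm_num at h1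

end
end

section
/- Let X be a connected metric space, Y a metric space, and let ψ = (n_ψ, w_ψ) be an ℕ-weighted map from X to Y with weighted index n, i.e. Σ_{y∈Y} w_ψ(x,y) = n for all x. Define F : X → SP^n(Y) by sending x to the class [y_1^{k_1}, …, y_m^{k_m}] in which each y_i ∈ n_ψ(x) is repeated k_i = w_ψ(x,y_i) times. Then F is continuous, where SP^n(Y) carries the quotient topology from Y^n; moreover the underlying set of F(x) equals n_ψ(x) for every x. -/
open Set Topology

/-- The `n`-fold symmetric product of `Y`: the quotient of `Y^n` by the
permutation action of the symmetric group, with the quotient topology. -/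
def SymmetricProduct (Y : Type*) (n : ℕ) : Type _ :=
  Quot (fun a b : Fin n → Y => ∃ σ : Equiv.Perm (Fin n), a ∘ σ = b)

/-- The quotient map `Y^n → SP^n(Y)`. -/
def spMk {Y : Type*} {n : ℕ} (a : Fin n → Y) : SymmetricProduct Y n :=
  Quot.mk _ a

instance symmetricProductTopology (Y : Type*) [TopologicalSpace Y] (n : ℕ) :
    TopologicalSpace (SymmetricProduct Y n) :=
  instTopologicalSpaceQuot
lemma exists_perm_of_ncard_fiber_eq {n : ℕ} {Y : Type*} (f g : Fin n → Y)
    (h : ∀ y, {i | f i = y}.ncard = {i | g i = y}.ncard) :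
    ∃ σ : Equiv.Perm (Fin n), ∀ i, g (σ i) = f i := by
  classical
  have key : ∀ y : Y, Nonempty ({ i // f i = y } ≃ { i // g i = y }) := by
    intro y
    have h1 : Nat.card { i // f i = y } = Nat.card { i // g i = y } := by
      have h2 := h y
      rw [← Nat.card_coe_set_eq, ← Nat.card_coe_set_eq] at h2
      exact h2
    haveI : Fintype { i // f i = y } := Fintype.ofFinite _
    haveI : Fintype { i // g i = y } := Fintype.ofFinite _
    rw [Nat.card_eq_fintype_card, Nat.card_eq_fintype_card] at h1
    exact ⟨Fintype.equivOfCardEq h1⟩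
  exact ⟨Equiv.ofFiberEquiv (fun y => (key y).some),
    fun i => Equiv.ofFiberEquiv_map _ i⟩

lemma ncard_mem_preimage {n : ℕ} {Y : Type*} (b : Fin n → Y) (w : Y → ℕ)
    (hw : ∀ y, {i | b i = y}.ncard = w y) (U : Set Y) :
    {i | b i ∈ U}.ncard = ∑ᶠ y ∈ U, w y := by
  classical
  have hsupp : Function.support w ⊆ Set.range b := by
    intro y hy
    by_contra hr
    have hempty : {i | b i = y} = (∅ : Set (Fin n)) := by
      ext i; simp only [Set.mem_setOf_eq, Set.mem_empty_iff_false, iff_false]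
      exact fun h => hr ⟨i, h⟩
    have := hw y
    rw [hempty, Set.ncard_empty] at this
    exact hy this.symm
  have hfin : (U ∩ Function.support w).Finite :=
    (Set.finite_range b).subset (Set.inter_subset_right.trans hsupp)
  rw [finsum_mem_eq_sum w hfin]
  set s : Finset (Fin n) := Finset.univ.filter (fun i => b i ∈ U) with hs
  have hL : {i | b i ∈ U} = (↑s : Set (Fin n)) := by
    ext i; simp [hs]
  rw [hL, Set.ncard_coe_finset]
  have hmap : ∀ i ∈ s, b i ∈ hfin.toFinset := by
    intro i hi
    rw [Set.Finite.mem_toFinset]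
    refine ⟨(Finset.mem_filter.1 hi).2, ?_⟩
    rw [Function.mem_support, ← hw (b i)]
    intro h0
    have hne : ({j | b j = b i} : Set (Fin n)).Nonempty := ⟨i, rfl⟩
    rw [Set.ncard_eq_zero (Set.toFinite _)] at h0
    exact hne.ne_empty h0
  rw [Finset.card_eq_sum_card_fiberwise hmap]
  refine Finset.sum_congr rfl ?_
  intro y hy
  rw [Set.Finite.mem_toFinset] at hy
  have heq : s.filter (fun i => b i = y) = Finset.univ.filter (fun i => b i = y) := by
    ext i
    simp only [hs, Finset.mem_filter, Finset.filter_filter, Finset.mem_univ, true_and]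
    exact ⟨fun h => h.2, fun h => ⟨h ▸ hy.1, h⟩⟩
  rw [heq, ← hw y, ← Set.ncard_coe_finset]
  congr 1
  ext i; simp

lemma exists_good_eps {Y : Type*} [MetricSpace Y] {S : Set Y} (hS : S.Finite) {ε0 : ℝ}
    (h0 : 0 < ε0) :
    ∃ ε : ℝ, 0 < ε ∧ ε ≤ ε0 ∧ ∀ y ∈ S, ∀ y' ∈ S, y ≠ y' → 2 * ε ≤ dist y y' := by
  classical
  set P := hS.toFinset.offDiag with hP
  by_cases hPe : P.Nonempty
  · set δ := P.inf' hPe (fun p => dist p.1 p.2) with hδdef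
    have hδ : 0 < δ := by
      rw [hδdef, Finset.lt_inf'_iff]
      rintro ⟨y, y'⟩ hp
      rw [hP, Finset.mem_offDiag] at hp
      exact dist_pos.2 hp.2.2
    refine ⟨min ε0 (δ / 2), by positivity, min_le_left _ _, ?_⟩
    intro y hy y' hy' hne
    have hmem : (y, y') ∈ P := by
      rw [hP, Finset.mem_offDiag]
      exact ⟨hS.mem_toFinset.2 hy, hS.mem_toFinset.2 hy', hne⟩
    have h2 : δ ≤ dist y y' := Finset.inf'_le _ hmem
    have h3 : min ε0 (δ / 2) ≤ δ / 2 := min_le_right _ _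
    linarith
  · refine ⟨ε0, h0, le_refl _, ?_⟩
    intro y hy y' hy' hne
    exact absurd ((Finset.mem_offDiag).2 ⟨hS.mem_toFinset.2 hy, hS.mem_toFinset.2 hy', hne⟩)
      (fun h => hPe ⟨(y, y'), h⟩)

/-- Theorem: let `ψ` be an `ℕ`-weighted map from a connected metric space `X`
to a metric space `Y` with weighted index `n` (the total weight at each point
is `n`).  Then the map `F : X → SP^n(Y)` sending `x` to the unordered `n`-tuple
in which each `y ∈ n_ψ(x)` is repeated `w_ψ(x,y)` times is continuous, and the
underlying set of `F(x)` equals `n_ψ(x)` for every `x`. -/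
theorem weightedMap_gives_continuous_symmetricProduct_map
    {X Y : Type*} [MetricSpace X] [MetricSpace Y] [ConnectedSpace X]
    (n : ℕ) (hn : 0 < n) (ψ : NWeightedMap X Y)
    (hindex : ∀ x : X, ∑ᶠ y : Y, ψ.weight x y = n)
    (F : X → SymmetricProduct Y n)
    (hF : ∀ x : X, ∃ a : Fin n → Y, F x = spMk a ∧
      ∀ y : Y, ({i : Fin n | a i = y}).ncard = ψ.weight x y) :
    Continuous F ∧
      ∀ x : X, ∃ a : Fin n → Y, F x = spMk a ∧ Set.range a = ψ.toFun x := by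
  classical
  -- the underlying set equality
  have hset : ∀ x : X, ∀ a : Fin n → Y,
      (∀ y, {i | a i = y}.ncard = ψ.weight x y) → Set.range a = ψ.toFun x := by
    intro x a ha
    ext y
    constructor
    · rintro ⟨i, rfl⟩
      by_contra hy
      have h0 : ψ.weight x (a i) = 0 := ψ.weight_eq_zero x _ hy
      have hcard := ha (a i)
      rw [h0, Set.ncard_eq_zero (Set.toFinite _)] at hcard
      exact (Set.Nonempty.ne_empty ⟨i, rfl⟩ : ({j | a j = a i} : Set (Fin n)) ≠ ∅) hcard
    · intro hy
      have hpos := ψ.weight_pos x y hy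
      rw [← ha y] at hpos
      obtain ⟨i, hi⟩ := Set.nonempty_of_ncard_ne_zero hpos.ne'
      exact ⟨i, hi⟩
  refine ⟨?_, fun x => by
    obtain ⟨a, h1, h2⟩ := hF x; exact ⟨a, h1, hset x a h2⟩⟩
  rw [continuous_def]
  intro W hW
  rw [isOpen_iff_forall_mem_open]
  intro x hx
  obtain ⟨a, hFx, ha⟩ := hF x
  have hrange_a : Set.range a = ψ.toFun x := hset x a ha
  have hcont : Continuous (spMk : (Fin n → Y) → SymmetricProduct Y n) := continuous_quot_mk
  have hQ : IsOpen (spMk ⁻¹' W : Set (Fin n → Y)) := hW.preimage hcont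
  have haQ : a ∈ spMk ⁻¹' W := by
    rw [Set.mem_preimage, ← hFx]; exact hx
  obtain ⟨ε0, hε0, hball⟩ := Metric.isOpen_iff.1 hQ a haQ
  obtain ⟨ε, hε, hεε0, hsep⟩ := exists_good_eps (ψ.finite_values x) hε0
  set S := ψ.toFun x with hSdef
  -- local constancy neighborhoods for each ball
  have hVy : ∀ y ∈ S, ∃ V : Set X, IsOpen V ∧ x ∈ V ∧
      ∀ z ∈ V, ∑ᶠ w ∈ Metric.ball y ε, ψ.weight x w = ∑ᶠ w ∈ Metric.ball y ε, ψ.weight z w := by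
    intro y hy
    apply ψ.sum_locally_const _ Metric.isOpen_ball
    rw [Set.eq_empty_iff_forall_notMem]
    rintro w ⟨hwS, hwf⟩
    have hdw : dist w y = ε := Metric.frontier_ball_subset_sphere hwf
    by_cases hwy : w = y
    · subst hwy
      rw [dist_self] at hdw
      exact hε.ne hdw
    · have h2 := hsep w hwS y hy hwy
      rw [hdw] at h2
      linarith
  choose! V hVopen hVmem hVsum using hVy
  set Uball : Set Y := ⋃ y ∈ S, Metric.ball y ε with hUdef
  have hU : IsOpen Uball := isOpen_biUnion fun _ _ => Metric.isOpen_ball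
  have hV0 : IsOpen {z | ψ.toFun z ⊆ Uball} := ψ.usc _ hU
  have hxV0 : x ∈ {z | ψ.toFun z ⊆ Uball} :=
    fun y hy => Set.mem_biUnion hy (Metric.mem_ball_self hε)
  set T := (ψ.finite_values x).toFinset with hTdef
  refine ⟨{z | ψ.toFun z ⊆ Uball} ∩ ⋂ y ∈ T, V y, ?_, ?_, ?_⟩
  · -- the neighborhood maps into W
    rintro z ⟨hz0, hz1⟩
    obtain ⟨b, hFz, hb⟩ := hF z
    have hrange_b : Set.range b = ψ.toFun z := hset z b hb
    have hbU : ∀ i, ∃ y, y ∈ S ∧ dist (b i) y < ε := by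
      intro i
      have hmem : b i ∈ Uball := hz0 (hrange_b ▸ Set.mem_range_self i)
      rw [hUdef, Set.mem_iUnion₂] at hmem
      obtain ⟨y, hy, hyb⟩ := hmem
      exact ⟨y, hy, Metric.mem_ball.1 hyb⟩
    choose g hgS hgd using hbU
    have hzV : ∀ y ∈ S, z ∈ V y := by
      intro y hy
      exact Set.mem_iInter₂.1 hz1 y ((ψ.finite_values x).mem_toFinset.2 hy)
    have hfib : ∀ y : Y, {i | a i = y}.ncard = {i | g i = y}.ncard := by
      intro y
      by_cases hy : y ∈ S
      · have hEq : {i | g i = y} = {i | b i ∈ Metric.ball y ε} := by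
          ext i
          simp only [Set.mem_setOf_eq, Metric.mem_ball]
          constructor
          · rintro rfl; exact hgd i
          · intro hd
            by_contra hne
            have h2 := hsep (g i) (hgS i) y hy hne
            have h3 : dist (g i) y ≤ dist (g i) (b i) + dist (b i) y := dist_triangle _ _ _
            rw [dist_comm (g i) (b i)] at h3
            linarith [hgd i]
        rw [hEq, ncard_mem_preimage b (ψ.weight z) hb (Metric.ball y ε),
          ← hVsum y hy z (hzV y hy), ha y]
        have hss : Metric.ball y ε ∩ Function.support (ψ.weight x) =
            {y} ∩ Function.support (ψ.weight x) := by
          ext w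
          simp only [Set.mem_inter_iff, Function.mem_support, Metric.mem_ball,
            Set.mem_singleton_iff]
          constructor
          · rintro ⟨hwb, hw0⟩
            have hwS : w ∈ S := by
              by_contra hcon; exact hw0 (ψ.weight_eq_zero x w hcon)
            refine ⟨?_, hw0⟩
            by_contra hwy
            have := hsep w hwS y hy hwy
            linarith
          · rintro ⟨rfl, hw0⟩
            exact ⟨Metric.mem_ball_self hε, hw0⟩
        rw [finsum_mem_inter_support_eq _ _ _ hss, finsum_mem_singleton]
      · have h1 : {i | g i = y} = (∅ : Set (Fin n)) := by
          ext i
          simp only [Set.mem_setOf_eq, Set.mem_empty_iff_false, iff_false]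
          rintro rfl
          exact hy (hgS i)
        have h2 : {i | a i = y} = (∅ : Set (Fin n)) := by
          ext i
          simp only [Set.mem_setOf_eq, Set.mem_empty_iff_false, iff_false]
          rintro rfl
          exact hy (hrange_a ▸ Set.mem_range_self i)
        rw [h1, h2]
    obtain ⟨σ, hσ⟩ := exists_perm_of_ncard_fiber_eq a g hfib
    have hc : b ∘ σ ∈ Metric.ball a ε0 := by
      rw [Metric.mem_ball, dist_pi_lt_iff hε0]
      intro i
      have h1 : dist (b (σ i)) (g (σ i)) < ε := hgd (σ i)
      rw [hσ i] at h1
      have : dist ((b ∘ σ) i) (a i) < ε := h1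
      rw [dist_comm]
      calc dist (a i) ((b ∘ σ) i) = dist ((b ∘ σ) i) (a i) := dist_comm _ _
        _ < ε := this
        _ ≤ ε0 := hεε0
    have hcQ : b ∘ σ ∈ spMk ⁻¹' W := hball hc
    have hmkeq : spMk b = spMk (b ∘ σ) := Quot.sound ⟨σ, rfl⟩
    show F z ∈ W
    rw [hFz, hmkeq]
    exact hcQ
  · exact hV0.inter (isOpen_biInter_finset fun y hy =>
      hVopen y ((ψ.finite_values x).mem_toFinset.1 hy))
  · exact ⟨hxV0, Set.mem_iInter₂.2 fun y hy =>
      hVmem y ((ψ.finite_values x).mem_toFinset.1 hy)⟩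
end

section
/- Let X be a connected metric space, Y a metric space, n a positive integer, and let F : X → SP^n(Y) be continuous, where SP^n(Y) is the n-fold symmetric product of Y with the quotient topology. Define n_φ(x) to be the underlying set of F(x) and w_φ(x,y) to be the multiplicity with which y occurs in F(x) (and 0 if y does not occur). Then (n_φ, w_φ) is an ℕ-weighted map from X to Y: n_φ is upper semicontinuous with finite values, w_φ(x,y) = 0 for y ∉ n_φ(x), w_φ(x,y) > 0 for y ∈ n_φ(x), and for every open U ⊆ Y and x ∈ X with n_φ(x) ∩ ∂U = ∅ there is a neighborhood V of x with Σ_{y∈U} w_φ(x,y) = Σ_{y∈U} w_φ(z,y) for all z ∈ V. -/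
open Set Topology

/-- A permutation-invariant predicate on `Y^n` descends to `SP^n(Y)`. -/
def SPLift {Y : Type*} {n : ℕ} (p : (Fin n → Y) → Prop)
    (hp : ∀ (a : Fin n → Y) (σ : Equiv.Perm (Fin n)), p (a ∘ σ) ↔ p a) :
    SymmetricProduct Y n → Prop :=
  Quot.lift p (by
    rintro a b ⟨σ, hσ⟩
    exact propext (hσ ▸ (hp a σ)).symm)

lemma spLift_mk {Y : Type*} {n : ℕ} (p : (Fin n → Y) → Prop)
    (hp : ∀ (a : Fin n → Y) (σ : Equiv.Perm (Fin n)), p (a ∘ σ) ↔ p a)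
    (a : Fin n → Y) : SPLift p hp (spMk a) ↔ p a := Iff.rfl

lemma isOpen_spLift {Y : Type*} [TopologicalSpace Y] {n : ℕ}
    (p : (Fin n → Y) → Prop)
    (hp : ∀ (a : Fin n → Y) (σ : Equiv.Perm (Fin n)), p (a ∘ σ) ↔ p a)
    (hopen : IsOpen {a : Fin n → Y | p a}) :
    IsOpen {q : SymmetricProduct Y n | SPLift p hp q} :=
  isOpen_coinduced.mpr hopen

lemma ncard_perm_preimage {n : ℕ} (σ : Equiv.Perm (Fin n)) (s : Set (Fin n)) :
    ({i | σ i ∈ s}).ncard = s.ncard := by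
  have h : {i | σ i ∈ s} = σ.symm '' s := by
    ext i
    simp [Set.mem_image_equiv]
  rw [h, Set.ncard_image_of_injective _ σ.symm.injective]

lemma finsum_multiplicity {Y : Type*} {n : ℕ} (a : Fin n → Y) (U : Set Y) :
    (∑ᶠ y ∈ U, ({i : Fin n | a i = y}).ncard) = ({i : Fin n | a i ∈ U}).ncard := by
  classical
  have hsupp : (Function.support fun y => ({i : Fin n | a i = y}).ncard) ⊆ Set.range a := by
    intro y hy
    rcases Set.nonempty_of_ncard_ne_zero hy with ⟨i, hi⟩
    exact ⟨i, hi⟩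
  have hfin : (U ∩ Function.support fun y => ({i : Fin n | a i = y}).ncard).Finite :=
    (Set.finite_range a).subset (Set.inter_subset_right.trans hsupp)
  rw [finsum_mem_eq_sum _ hfin]
  have hc : ∀ (p : Fin n → Prop), ({i | p i}).ncard = (Finset.univ.filter p).card := by
    intro p
    rw [Set.ncard_eq_toFinset_card', Set.toFinset_setOf]
  rw [hc (fun i => a i ∈ U)]
  rw [Finset.card_eq_sum_card_fiberwise (f := a) (t := hfin.toFinset)
      (fun i hi => by
        simp only [Finset.mem_coe, Finset.mem_filter, Finset.mem_univ, true_and] at hi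
        simp only [Finset.mem_coe, Set.Finite.mem_toFinset, Set.mem_inter_iff, Function.mem_support]
        exact ⟨hi, ne_of_gt ((Set.ncard_pos (Set.toFinite _)).mpr ⟨i, rfl⟩)⟩)]
  refine Finset.sum_congr rfl fun y hy => ?_
  simp only [Set.Finite.mem_toFinset, Set.mem_inter_iff] at hy
  rw [hc (fun i => a i = y)]
  congr 1
  ext i
  simp only [Finset.mem_filter, Finset.mem_univ, true_and]
  exact ⟨fun h => ⟨h ▸ hy.1, h⟩, And.right⟩

/-- Theorem: let `F : X → SP^n(Y)` be a continuous map from a connected metric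
space into the `n`-fold symmetric product of a metric space `Y` (with the
quotient topology).  Let `n_φ(x)` be the underlying set of `F(x)` and let
`w_φ(x,y)` be the multiplicity with which `y` occurs in `F(x)`.  Then
`(n_φ, w_φ)` is an `ℕ`-weighted map from `X` to `Y`: `n_φ` is upper
semicontinuous with finite values, `w_φ` vanishes off the graph of `n_φ`, is
strictly positive on it, and satisfies the local weight-sum condition. -/
theorem symmetricProduct_map_gives_weightedMap
    {X Y : Type*} [MetricSpace X] [MetricSpace Y] [ConnectedSpace X]
    (n : ℕ) (hn : 0 < n)
    (F : X → SymmetricProduct Y n) (hFcont : Continuous F)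
    (nφ : X → Set Y) (wφ : X → Y → ℕ)
    (hdef : ∀ x : X, ∃ a : Fin n → Y, F x = spMk a ∧ nφ x = Set.range a ∧
      ∀ y : Y, wφ x y = ({i : Fin n | a i = y}).ncard) :
    (∀ V : Set Y, IsOpen V → IsOpen {x | nφ x ⊆ V}) ∧
      (∀ x, (nφ x).Finite) ∧
      (∀ x y, y ∉ nφ x → wφ x y = 0) ∧
      (∀ x y, y ∈ nφ x → 0 < wφ x y) ∧
      (∀ U : Set Y, IsOpen U → ∀ x : X, nφ x ∩ frontier U = ∅ →
        ∃ V : Set X, IsOpen V ∧ x ∈ V ∧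
          ∀ z ∈ V, ∑ᶠ y ∈ U, wφ x y = ∑ᶠ y ∈ U, wφ z y) := by
  classical
  refine ⟨?_, ?_, ?_, ?_, ?_⟩
  · -- upper semicontinuity
    intro V hV
    set p : (Fin n → Y) → Prop := fun a => ∀ i, a i ∈ V with hpdef
    have hp : ∀ (a : Fin n → Y) (σ : Equiv.Perm (Fin n)), p (a ∘ σ) ↔ p a :=
      fun a σ => ⟨fun h i => by simpa using h (σ.symm i), fun h i => h _⟩
    have hkey : {x | nφ x ⊆ V} = F ⁻¹' {q | SPLift p hp q} := by
      ext x
      obtain ⟨a, hFa, hra, -⟩ := hdef x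
      simp only [Set.mem_setOf_eq, Set.mem_preimage, hFa, spLift_mk, hra, hpdef]
      constructor
      · intro h i; exact h ⟨i, rfl⟩
      · rintro h y ⟨i, rfl⟩; exact h i
    rw [hkey]
    refine hFcont.isOpen_preimage _ (isOpen_spLift p hp ?_)
    have : {a : Fin n → Y | p a} = Set.pi Set.univ fun _ => V := by
      ext a; simp [hpdef, Set.mem_pi]
    rw [this]
    exact isOpen_set_pi Set.finite_univ fun i _ => hV
  · intro x
    obtain ⟨a, -, hra, -⟩ := hdef x
    rw [hra]; exact Set.finite_range a
  · intro x y hy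
    obtain ⟨a, -, hra, hwa⟩ := hdef x
    rw [hwa y, Set.ncard_eq_zero (Set.toFinite _)]
    ext i
    simp only [Set.mem_setOf_eq, Set.mem_empty_iff_false, iff_false]
    intro h
    exact hy (hra ▸ ⟨i, h⟩)
  · intro x y hy
    obtain ⟨a, -, hra, hwa⟩ := hdef x
    rw [hra] at hy
    obtain ⟨i, hi⟩ := hy
    rw [hwa y]
    exact (Set.ncard_pos (Set.toFinite _)).mpr ⟨i, hi⟩
  · -- local weight-sum condition
    intro U hU x hxU
    obtain ⟨a, hFa, hra, hwa⟩ := hdef x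
    set k : ℕ := ({i : Fin n | a i ∈ U}).ncard with hk
    set p : (Fin n → Y) → Prop :=
      fun b => (∀ i, b i ∈ U ∪ (closure U)ᶜ) ∧ ({i : Fin n | b i ∈ U}).ncard = k with hpdef
    have hp : ∀ (b : Fin n → Y) (σ : Equiv.Perm (Fin n)), p (b ∘ σ) ↔ p b := by
      intro b σ
      constructor
      · rintro ⟨h1, h2⟩
        refine ⟨fun i => by simpa using h1 (σ.symm i), ?_⟩
        rw [← h2]
        exact (ncard_perm_preimage σ {i | b i ∈ U}).symm
      · rintro ⟨h1, h2⟩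
        exact ⟨fun i => h1 _, by
          rw [← h2]; exact ncard_perm_preimage σ {i | b i ∈ U}⟩
    have hopen : IsOpen {b : Fin n → Y | p b} := by
      rw [isOpen_iff_mem_nhds]
      intro b hb
      obtain ⟨hb1, hb2⟩ := hb
      set O : Fin n → Set Y := fun i => if b i ∈ U then U else (closure U)ᶜ with hO
      have hOopen : ∀ i, IsOpen (O i) := fun i => by
        by_cases h : b i ∈ U
        · simp only [hO, if_pos h]; exact hU
        · simp only [hO, if_neg h]; exact isClosed_closure.isOpen_compl
      have hbO : ∀ i, b i ∈ O i := fun i => by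
        by_cases h : b i ∈ U
        · simp only [hO, if_pos h]; exact h
        · simp only [hO, if_neg h]; exact (hb1 i).resolve_left h
      have hN : IsOpen (Set.pi Set.univ O) := isOpen_set_pi Set.finite_univ fun i _ => hOopen i
      refine Filter.mem_of_superset (hN.mem_nhds (by simp [Set.mem_pi, hbO])) ?_
      intro c hc
      simp only [Set.mem_pi, Set.mem_univ, forall_true_left] at hc
      have hsame : {i : Fin n | c i ∈ U} = {i : Fin n | b i ∈ U} := by
        ext i
        have hci := hc i
        rw [hO] at hci; dsimp only at hci
        by_cases h : b i ∈ U
        · simp only [if_pos h] at hci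
          simp [h, hci]
        · simp only [if_neg h] at hci
          simp only [Set.mem_setOf_eq, h, iff_false]
          exact fun hcU => hci (subset_closure hcU)
      refine ⟨fun i => ?_, by rw [hsame]; exact hb2⟩
      · have hci := hc i
        rw [hO] at hci; dsimp only at hci
        by_cases h : b i ∈ U
        · simp only [if_pos h] at hci; exact Or.inl hci
        · simp only [if_neg h] at hci; exact Or.inr hci
    refine ⟨F ⁻¹' {q | SPLift p hp q}, hFcont.isOpen_preimage _ (isOpen_spLift p hp hopen), ?_, ?_⟩
    · -- x ∈ V
      show SPLift p hp (F x)
      rw [hFa, spLift_mk]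
      refine ⟨fun i => ?_, rfl⟩
      by_cases h : a i ∈ U
      · exact Or.inl h
      · refine Or.inr fun hcl => ?_
        have : a i ∈ nφ x ∩ frontier U := by
          refine ⟨hra ▸ ⟨i, rfl⟩, ?_⟩
          rw [frontier_eq_closure_inter_closure, hU.isClosed_compl.closure_eq]
          exact ⟨hcl, h⟩
        rw [hxU] at this
        exact this
    · intro z hz
      obtain ⟨b, hFb, hrb, hwb⟩ := hdef z
      have hzp : p b := by
        have : SPLift p hp (F z) := hz
        rwa [hFb, spLift_mk] at this
      calc ∑ᶠ y ∈ U, wφ x y = ∑ᶠ y ∈ U, ({i : Fin n | a i = y}).ncard :=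
            finsum_mem_congr rfl fun y _ => hwa y
        _ = k := finsum_multiplicity a U
        _ = ∑ᶠ y ∈ U, ({i : Fin n | b i = y}).ncard := by
            rw [finsum_multiplicity b U, hzp.2]
        _ = ∑ᶠ y ∈ U, wφ z y := finsum_mem_congr rfl fun y _ => (hwb y).symm
end

section
/- Let X and Y be metric spaces and n a positive integer. Let f : X → Set Y be lower and upper semicontinuous with the cardinality of f(x) equal to either 1 or n for every x ∈ X (a {1,n}-valued map). Then there exists a continuous map g : X → SP^n(Y), where SP^n(Y) is the n-fold symmetric product with the quotient topology, such that for every x ∈ X the underlying set of g(x) equals f(x). That is, every {1,n}-valued map is realized by a symmetric product map. -/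
open Set Topology

/-- The range of an injective function from `Fin n` has `ncard` equal to `n`. -/
lemma aux_ncard_range {Y : Type*} {n : ℕ} {a : Fin n → Y} (h : Function.Injective a) :
    (Set.range a).ncard = n := by
  rw [← Set.image_univ, Set.ncard_image_of_injective _ h, Set.ncard_univ,
    Nat.card_eq_fintype_card, Fintype.card_fin]

/-- A function `Fin n → Y` whose range has `ncard = n` is injective. -/
lemma aux_inj_of_ncard {Y : Type*} {n : ℕ} {a : Fin n → Y} (h : (Set.range a).ncard = n) :
    Function.Injective a := by
  have hb : Function.Bijective (Set.rangeFactorization a) := by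
    rw [Nat.bijective_iff_surjective_and_card]
    refine ⟨Set.rangeFactorization_surjective, ?_⟩
    rw [Nat.card_eq_fintype_card, Fintype.card_fin, Nat.card_coe_set_eq, h]
  intro i j hij
  exact hb.1 (Subtype.ext hij)

/-- Two enumerations with the same range of cardinality `1` or `n` differ by a permutation. -/
lemma aux_perm {Y : Type*} {n : ℕ} {a b : Fin n → Y} (hab : Set.range a = Set.range b)
    (h : (Set.range a).ncard = 1 ∨ (Set.range a).ncard = n) :
    ∃ σ : Equiv.Perm (Fin n), a ∘ σ = b := by
  rcases h with h1 | hN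
  · obtain ⟨y, hy⟩ := Set.ncard_eq_one.mp h1
    refine ⟨1, funext fun i => ?_⟩
    have hb : b i ∈ Set.range a := hab ▸ Set.mem_range_self i
    have ha : a i ∈ Set.range a := Set.mem_range_self i
    rw [hy, Set.mem_singleton_iff] at hb ha
    simpa [ha] using hb.symm
  · have ha : Function.Injective a := aux_inj_of_ncard hN
    have hbinj : Function.Injective b := aux_inj_of_ncard (by rw [← hab]; exact hN)
    refine ⟨((Equiv.ofInjective b hbinj).trans (Equiv.setCongr hab.symm)).trans
      (Equiv.ofInjective a ha).symm, funext fun i => ?_⟩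
    have h2 := (Equiv.ofInjective a ha).apply_symm_apply
      ((Equiv.setCongr hab.symm) (Equiv.ofInjective b hbinj i))
    exact congrArg Subtype.val h2

/-- Any finite set of cardinality `1` or `n` admits an enumeration by `Fin n`. -/
lemma aux_enum {Y : Type*} {n : ℕ} (hn : 0 < n) {S : Set Y} (hfin : S.Finite)
    (h : S.ncard = 1 ∨ S.ncard = n) : ∃ a : Fin n → Y, Set.range a = S := by
  haveI : Nonempty (Fin n) := Fin.pos_iff_nonempty.mp hn
  rcases h with h1 | hN
  · obtain ⟨y, rfl⟩ := Set.ncard_eq_one.mp h1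
    exact ⟨fun _ => y, Set.range_const⟩
  · haveI := hfin.fintype
    have hc : Fintype.card S = n := by
      rwa [← Nat.card_coe_set_eq, Nat.card_eq_fintype_card] at hN
    let e := (Fintype.equivFinOfCardEq hc).symm
    refine ⟨fun i => (e i : Y), ?_⟩
    ext y
    constructor
    · rintro ⟨i, rfl⟩; exact (e i).2
    · intro hy; exact ⟨e.symm ⟨y, hy⟩, by simp⟩

/-- Theorem: every `{1,n}`-valued map between metric spaces is realized by a
symmetric product map.  If `f : X ⊸ Y` is lower and upper semicontinuous with
every value finite of cardinality `1` or `n`, then there is a continuous map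
`g : X → SP^n(Y)` such that the underlying set of `g(x)` equals `f(x)` for
every `x`. -/
theorem one_n_valued_realized_by_symmetricProduct
    {X Y : Type*} [MetricSpace X] [MetricSpace Y] (n : ℕ) (hn : 0 < n)
    (f : X → Set Y)
    (hlsc : LowerSemicontinuousMultimap f) (husc : UpperSemicontinuousMultimap f)
    (hfin : ∀ x, (f x).Finite)
    (hcard : ∀ x, (f x).ncard = 1 ∨ (f x).ncard = n) :
    ∃ g : X → SymmetricProduct Y n, Continuous g ∧
      ∀ x : X, ∃ a : Fin n → Y, g x = spMk a ∧ Set.range a = f x := by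
  classical
  have henum : ∀ x, ∃ a : Fin n → Y, Set.range a = f x := fun x =>
    aux_enum hn (hfin x) (hcard x)
  choose A hA using henum
  have hwd : ∀ x (c : Fin n → Y), Set.range c = f x → spMk (A x) = spMk c := by
    intro x c hc
    obtain ⟨σ, hσ⟩ := aux_perm (a := A x) (b := c) (by rw [hA x, hc])
      (by rw [hA x]; exact hcard x)
    exact Quot.sound ⟨σ, hσ⟩
  refine ⟨fun x => spMk (A x), ?_, fun x => ⟨A x, rfl, hA x⟩⟩
  rw [continuous_def]
  intro O hO
  have hU : IsOpen (spMk (Y := Y) (n := n) ⁻¹' O) := isOpen_coinduced.mp hO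
  set U : Set (Fin n → Y) := spMk ⁻¹' O with hUdef
  rw [isOpen_iff_forall_mem_open]
  intro x₀ hx₀
  have hAU : A x₀ ∈ U := hx₀
  obtain ⟨V, hV, hVU⟩ := isOpen_pi_iff'.mp hU (A x₀) hAU
  rcases hcard x₀ with h1 | hN
  · -- singleton case
    obtain ⟨y, hy⟩ := Set.ncard_eq_one.mp h1
    have hay : ∀ i, A x₀ i = y := by
      intro i
      have h := Set.mem_range_self (f := A x₀) i
      rw [hA x₀, hy, Set.mem_singleton_iff] at h
      exact h
    refine ⟨{x | f x ⊆ ⋂ i, V i}, ?_, husc _ (isOpen_iInter_of_finite fun i => (hV i).1), ?_⟩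
    · intro x hx
      have hc : A x ∈ Set.univ.pi V := by
        intro i _
        have : A x i ∈ f x := by rw [← hA x]; exact Set.mem_range_self i
        exact Set.mem_iInter.mp (hx this) i
      exact hVU hc
    · show f x₀ ⊆ ⋂ i, V i
      rw [hy]
      refine Set.singleton_subset_iff.mpr (Set.mem_iInter.mpr fun i => ?_)
      rw [← hay i]; exact (hV i).2
  · -- cardinality-n case
    have hainj : Function.Injective (A x₀) := aux_inj_of_ncard (by rw [hA x₀]; exact hN)
    set D : Fin n → Set Y := fun i =>
      ⋂ j, {y | j = i ∨ dist y (A x₀ i) < dist y (A x₀ j)} with hD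
    have hDopen : ∀ i, IsOpen (D i) := by
      intro i
      refine isOpen_iInter_of_finite fun j => ?_
      by_cases hji : j = i
      · simp [hji]
      · have he : {y : Y | j = i ∨ dist y (A x₀ i) < dist y (A x₀ j)} =
            {y | dist y (A x₀ i) < dist y (A x₀ j)} := by
          ext y; simp [hji]
        rw [he]
        exact isOpen_lt (continuous_id.dist continuous_const)
          (continuous_id.dist continuous_const)
    have hmemD : ∀ i, A x₀ i ∈ D i := by
      intro i
      refine Set.mem_iInter.mpr fun j => ?_
      by_cases hji : j = i
      · exact Or.inl hji
      · refine Or.inr ?_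
        have hne : A x₀ i ≠ A x₀ j := fun h => hji (hainj h).symm
        rw [dist_self]
        exact dist_pos.mpr hne
    have hdisj : ∀ i j, i ≠ j → ∀ y, y ∈ D i → y ∈ D j → False := by
      intro i j hij y hyi hyj
      have h1 := Set.mem_iInter.mp hyi j
      have h2 := Set.mem_iInter.mp hyj i
      rcases h1 with h | h
      · exact hij h.symm
      · rcases h2 with h' | h'
        · exact hij h'
        · exact absurd h (not_lt.mpr h'.le)
    set V' : Fin n → Set Y := fun i => V i ∩ D i with hV'
    have hV'open : ∀ i, IsOpen (V' i) := fun i => (hV i).1.inter (hDopen i)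
    refine ⟨{x | f x ⊆ ⋃ i, V' i} ∩ ⋂ i, {x | (f x ∩ V' i).Nonempty}, ?_, ?_, ?_⟩
    · intro x hx
      obtain ⟨hx1, hx2⟩ := hx
      have hcne : ∀ i, (f x ∩ V' i).Nonempty := fun i => Set.mem_iInter.mp hx2 i
      choose c hci using hcne
      have hcinj : Function.Injective c := by
        intro i j hij
        by_contra hne
        exact hdisj i j hne (c i) (hci i).2.2 (hij ▸ (hci j).2.2)
      have hsub : Set.range c ⊆ f x := by rintro z ⟨i, rfl⟩; exact (hci i).1
      have hle : n ≤ (f x).ncard := by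
        have h := Set.ncard_le_ncard hsub (hfin x)
        rwa [aux_ncard_range hcinj] at h
      have hfx : (f x).ncard = n := by
        rcases hcard x with h | h
        · omega
        · exact h
      have hrange : Set.range c = f x :=
        Set.eq_of_subset_of_ncard_le hsub
          (by rw [aux_ncard_range hcinj, hfx]) (hfin x)
      have hcU : c ∈ U := hVU (fun i _ => (hci i).2.1)
      show spMk (A x) ∈ O
      rw [hwd x c hrange]
      exact hcU
    · exact (husc _ (isOpen_iUnion fun i => hV'open i)).inter
        (isOpen_iInter_of_finite fun i => hlsc _ (hV'open i))
    · constructor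
      · intro y hy
        rw [← hA x₀] at hy
        obtain ⟨i, rfl⟩ := hy
        exact Set.mem_iUnion.mpr ⟨i, (hV i).2, hmemD i⟩
      · refine Set.mem_iInter.mpr fun i => ⟨A x₀ i, ?_, (hV i).2, hmemD i⟩
        rw [← hA x₀]; exact Set.mem_range_self i
end
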